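/- Let L(n) = Π_{k=0}^{n-1} (1 + 4sin²(πk/n)) be the Fredholm determinant det(1+K) for the cycle graph C_n. Then (1/n) log(L(n)/n²) converges as n → ∞ to 2 log φ, where φ is the golden ratio. -/

import Mathlib

open Real

/-- `L n = Π_{k=0}^{n-1} (1 + 4 sin²(πk/n))`, the number of rooted spanning forests
of the cycle graph `C_n` (the Fredholm determinant `det(1+K)`). -/
noncomputable def cycleForests (n : ℕ) : ℝ :=
  ∏ k ∈ Finset.range n, (1 + 4 * Real.sin (π * k / n) ^ 2)

private lemma prod_range_sub_pow (n : ℕ) (hn : 0 < n) (z : ℂ) :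
    ∏ k ∈ Finset.range n, (z - Complex.exp (2 * π * Complex.I / n) ^ k) = z ^ n - 1 := by
  haveI : NeZero n := ⟨hn.ne'⟩
  set μ : ℂ := Complex.exp (2 * π * Complex.I / n) with hμ
  have h : IsPrimitiveRoot μ n := Complex.isPrimitiveRoot_exp n hn.ne'
  have h1 : (Polynomial.X ^ n - 1 : Polynomial ℂ)
      = ∏ ζ ∈ Polynomial.nthRootsFinset n (1 : ℂ), (Polynomial.X - Polynomial.C ζ) :=
    Polynomial.X_pow_sub_one_eq_prod hn h
  have h2 := congrArg (Polynomial.eval z) h1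
  simp only [Polynomial.eval_sub, Polynomial.eval_pow, Polynomial.eval_X, Polynomial.eval_one,
    Polynomial.eval_prod, Polynomial.eval_C] at h2
  rw [h2]
  refine Finset.prod_nbij (fun k => μ ^ k) ?_ ?_ ?_ ?_
  · intro k _
    refine (Polynomial.mem_nthRootsFinset hn (1 : ℂ)).2 ?_
    rw [← pow_mul, mul_comm, pow_mul, h.pow_eq_one, one_pow]
  · exact h.injOn_pow
  · intro ζ hζ
    have hζ1 : ζ ^ n = 1 := (Polynomial.mem_nthRootsFinset hn (1 : ℂ)).1 hζ
    obtain ⟨i, hi, hiζ⟩ := h.eq_pow_of_pow_eq_one hζ1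
    exact ⟨i, by simpa using hi, hiζ⟩
  · intro k _
    rfl

private lemma factor_real (x a : ℝ) (hx : x ^ 2 = 3 * x - 1) :
    (x - Real.cos (2 * a)) ^ 2 + Real.sin (2 * a) ^ 2 = x * (1 + 4 * Real.sin a ^ 2) := by
  have h1 := Real.sin_sq_add_cos_sq (2 * a)
  have h2 := Real.cos_two_mul a
  have h3 := Real.sin_sq_add_cos_sq a
  nlinarith [h1, h2, h3]

private lemma closed_form (n : ℕ) (hn : 0 < n) :
    ((3 + Real.sqrt 5) / 2) ^ n * cycleForests n = (((3 + Real.sqrt 5) / 2) ^ n - 1) ^ 2 := by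
  set x : ℝ := (3 + Real.sqrt 5) / 2 with hxdef
  have h5 : Real.sqrt 5 ^ 2 = 5 := Real.sq_sqrt (by norm_num)
  have hx : x ^ 2 = 3 * x - 1 := by
    rw [hxdef]; nlinarith [h5]
  set μ : ℂ := Complex.exp (2 * π * Complex.I / n) with hμ
  -- each complex factor
  have key : ∀ k ∈ Finset.range n,
      ((x : ℂ) - μ ^ k) * ((x : ℂ) - (starRingEnd ℂ) (μ ^ k))
        = ((x * (1 + 4 * Real.sin (π * k / n) ^ 2) : ℝ) : ℂ) := by
    intro k _
    have hθ : μ ^ k = Complex.exp (((2 * (π * k / n) : ℝ) : ℂ) * Complex.I) := by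
      rw [hμ, ← Complex.exp_nat_mul]
      congr 1
      push_cast
      ring
    have hcs : μ ^ k = ((Real.cos (2 * (π * k / n)) : ℝ) : ℂ)
        + ((Real.sin (2 * (π * k / n)) : ℝ) : ℂ) * Complex.I := by
      rw [hθ, Complex.exp_mul_I, Complex.ofReal_cos, Complex.ofReal_sin]
    have hconj : (starRingEnd ℂ) (μ ^ k) = ((Real.cos (2 * (π * k / n)) : ℝ) : ℂ)
        - ((Real.sin (2 * (π * k / n)) : ℝ) : ℂ) * Complex.I := by
      rw [hcs]
      simp [map_add, map_mul, Complex.conj_I, ← Complex.ofReal_cos, ← Complex.ofReal_sin,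
        Complex.conj_ofReal, sub_eq_add_neg]
    rw [hconj, hcs]
    have hI : (Complex.I : ℂ) ^ 2 = -1 := Complex.I_sq
    have expand : ((x : ℂ) - (((Real.cos (2 * (π * k / n)) : ℝ) : ℂ)
          + ((Real.sin (2 * (π * k / n)) : ℝ) : ℂ) * Complex.I))
        * ((x : ℂ) - (((Real.cos (2 * (π * k / n)) : ℝ) : ℂ)
          - ((Real.sin (2 * (π * k / n)) : ℝ) : ℂ) * Complex.I))
        = (((x - Real.cos (2 * (π * k / n))) ^ 2 + Real.sin (2 * (π * k / n)) ^ 2 : ℝ) : ℂ) := by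
      push_cast
      linear_combination (-(Complex.sin (2 * ((π : ℂ) * k / n)) ^ 2)) * hI
    rw [expand, factor_real x (π * k / n) hx]
  -- product over conjugate pairs
  have prod1 : ∏ k ∈ Finset.range n, ((x : ℂ) - μ ^ k) = (x : ℂ) ^ n - 1 :=
    prod_range_sub_pow n hn (x : ℂ)
  have prod2 : ∏ k ∈ Finset.range n, ((x : ℂ) - (starRingEnd ℂ) (μ ^ k))
      = (x : ℂ) ^ n - 1 := by
    have : ∏ k ∈ Finset.range n, ((x : ℂ) - (starRingEnd ℂ) (μ ^ k))
        = (starRingEnd ℂ) (∏ k ∈ Finset.range n, ((x : ℂ) - μ ^ k)) := by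
      rw [map_prod]
      refine Finset.prod_congr rfl fun k _ => ?_
      rw [map_sub, Complex.conj_ofReal]
    rw [this, prod1]
    rw [map_sub, map_pow, Complex.conj_ofReal, map_one]
  have main : (((x ^ n - 1) ^ 2 : ℝ) : ℂ) = ((x ^ n * cycleForests n : ℝ) : ℂ) := by
    calc (((x ^ n - 1) ^ 2 : ℝ) : ℂ)
        = ((x : ℂ) ^ n - 1) * ((x : ℂ) ^ n - 1) := by push_cast; ring
      _ = (∏ k ∈ Finset.range n, ((x : ℂ) - μ ^ k))
            * ∏ k ∈ Finset.range n, ((x : ℂ) - (starRingEnd ℂ) (μ ^ k)) := by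
          rw [prod1, prod2]
      _ = ∏ k ∈ Finset.range n,
            (((x : ℂ) - μ ^ k) * ((x : ℂ) - (starRingEnd ℂ) (μ ^ k))) :=
          (Finset.prod_mul_distrib).symm
      _ = ∏ k ∈ Finset.range n, ((x * (1 + 4 * Real.sin (π * k / n) ^ 2) : ℝ) : ℂ) :=
          Finset.prod_congr rfl key
      _ = ((x ^ n * cycleForests n : ℝ) : ℂ) := by
          rw [← Complex.ofReal_prod]
          norm_cast
          rw [Finset.prod_mul_distrib, Finset.prod_const, Finset.card_range, cycleForests]
  have := Complex.ofReal_injective main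
  linarith [this]

private lemma tendsto_aux :
    Filter.Tendsto (fun n : ℕ => Real.log n / n) Filter.atTop (nhds 0) := by
  have h := Real.isLittleO_log_id_atTop.tendsto_div_nhds_zero
  exact h.comp tendsto_natCast_atTop_atTop

/-- The tree-forest index `(1/n) log(L(n)/n²)` of the cycle graph `C_n` converges to
`2 log φ`, where `φ = (1+√5)/2` is the golden ratio. -/
theorem treeForestIndex_cycle_tendsto :
    Filter.Tendsto (fun n : ℕ => (1 / (n : ℝ)) * Real.log (cycleForests n / (n : ℝ) ^ 2))
      Filter.atTop (nhds (2 * Real.log ((1 + Real.sqrt 5) / 2))) := by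
  set x : ℝ := (3 + Real.sqrt 5) / 2 with hxdef
  have h5 : Real.sqrt 5 ^ 2 = 5 := Real.sq_sqrt (by norm_num)
  have h5pos : (1 : ℝ) < Real.sqrt 5 := by
    nlinarith [Real.sqrt_nonneg 5]
  have hx1 : (1 : ℝ) < x := by rw [hxdef]; nlinarith
  have hxpos : (0 : ℝ) < x := by linarith
  have hphi : ((1 + Real.sqrt 5) / 2) ^ 2 = x := by
    rw [hxdef]; nlinarith
  have hlogx : 2 * Real.log ((1 + Real.sqrt 5) / 2) = Real.log x := by
    rw [← hphi, Real.log_pow]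
    push_cast
    ring
  rw [hlogx]
  -- the target decomposition
  have hr : |1 / x| < 1 := by
    rw [abs_of_pos (by positivity)]
    rw [div_lt_one hxpos]; linarith
  have hrt : Filter.Tendsto (fun n : ℕ => (1 / x) ^ n) Filter.atTop (nhds 0) :=
    tendsto_pow_atTop_nhds_zero_of_abs_lt_one hr
  have hlog1 : Filter.Tendsto (fun n : ℕ => Real.log (1 - (1 / x) ^ n)) Filter.atTop (nhds 0) := by
    have hc : Filter.Tendsto (fun n : ℕ => 1 - (1 / x) ^ n) Filter.atTop (nhds 1) := by
      have := hrt.const_sub 1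
      simpa using this
    have hcont : ContinuousAt Real.log 1 := Real.continuousAt_log (by norm_num)
    have := hcont.tendsto.comp hc
    simpa [Function.comp_def] using this
  have hinv : Filter.Tendsto (fun n : ℕ => (1 : ℝ) / n) Filter.atTop (nhds 0) :=
    tendsto_one_div_atTop_nhds_zero_nat
  -- decomposed limit function
  have hfinal : Filter.Tendsto
      (fun n : ℕ => Real.log x + 2 * ((1 / (n : ℝ)) * Real.log (1 - (1 / x) ^ n))
        - 2 * (Real.log n / n)) Filter.atTop (nhds (Real.log x)) := by
    have t1 : Filter.Tendsto (fun n : ℕ => (1 / (n : ℝ)) * Real.log (1 - (1 / x) ^ n))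
        Filter.atTop (nhds 0) := by
      have := hinv.mul hlog1
      simpa using this
    have t2 := ((tendsto_const_nhds (x := Real.log x) (f := Filter.atTop (α := ℕ))).add
      (t1.const_mul 2)).sub (tendsto_aux.const_mul 2)
    simpa using t2
  refine hfinal.congr' ?_
  filter_upwards [Filter.eventually_ge_atTop 1] with n hn
  have hnpos : (0 : ℝ) < n := by exact_mod_cast hn
  have hxn1 : (1 : ℝ) < x ^ n := one_lt_pow₀ hx1 (by omega)
  have hxnpos : (0 : ℝ) < x ^ n := by linarith
  have hcf : cycleForests n = (x ^ n - 1) ^ 2 / x ^ n := by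
    have h := closed_form n (by omega)
    field_simp
    linarith [h]
  have hsub : x ^ n - 1 = x ^ n * (1 - (1 / x) ^ n) := by
    rw [one_div_pow, mul_sub, mul_one, mul_one_div_cancel hxnpos.ne']
  have hpos1 : (0 : ℝ) < 1 - (1 / x) ^ n := by
    have hlt : (1 : ℝ) / x < 1 := by rw [div_lt_one hxpos]; linarith
    have : ((1 : ℝ) / x) ^ n < 1 := pow_lt_one₀ (by positivity) hlt (by omega)
    linarith
  have hn0 : (n : ℝ) ≠ 0 := hnpos.ne'
  have hne1 : x ^ n - 1 ≠ 0 := ne_of_gt (by linarith)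
  have hlogcf : Real.log (cycleForests n / (n : ℝ) ^ 2)
      = n * Real.log x + 2 * Real.log (1 - (1 / x) ^ n) - 2 * Real.log n := by
    rw [hcf]
    rw [Real.log_div (div_ne_zero (pow_ne_zero 2 hne1) hxnpos.ne') (pow_ne_zero 2 hn0),
      Real.log_div (pow_ne_zero 2 hne1) hxnpos.ne']
    rw [Real.log_pow, Real.log_pow, hsub, Real.log_mul hxnpos.ne' hpos1.ne',
      Real.log_pow]
    push_cast
    ring_nf
    rw [Real.log_pow]
    push_cast
    ring
  rw [hlogcf]
  field_simp
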